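/- Let c ∈ (0, 1/2], r ≥ 2, let (X_i)_{i≥1} be i.i.d. real random variables with E[|X_1|^r] < ∞, let π be a measurable function with values in [c, 1−c], and set π_i = π(X_i). For each n, let (D_{n,1},...,D_{n,n}) be {0,1}-valued random variables and q_n ≥ 1 a constant such that, almost surely, | (1/n)·Σ_{i=1}^n X_i·D_{n,i}/π_i − (1/n)·Σ_{i=1}^n X_i | ≤ (q_n/n)·max_{1≤i≤n} |X_i/π_i|. Define Δ_n = (1/n)·Σ_{i=1}^n X_i·D_{n,i}/π_i − (1/n)·Σ_{i=1}^n X_i. Then (n^{1−1/r}/q_n)·Δ_n → 0 in probability as n → ∞. Moreover, if |X_1| ≤ K almost surely for a constant K, then |Δ_n| ≤ K·q_n/(c·n) almost surely. -/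

import Mathlib

open MeasureTheory ProbabilityTheory Filter Topology
open scoped ENNReal

/-- For i.i.d. covariates with a finite `r`-th moment (`r ≥ 2`),
propensities `π(Xᵢ) ∈ [c, 1−c]`, and designs satisfying the cube-method rounding bound
`|Δₙ| ≤ (qₙ/n)·maxᵢ |Xᵢ/πᵢ|` a.s., where `Δₙ` is the Horvitz–Thompson covariate imbalance,
one has `(n^{1−1/r}/qₙ)·Δₙ → 0` in probability; moreover if `|X₁| ≤ K` a.s. then
`|Δₙ| ≤ K·qₙ/(c·n)` a.s. -/
theorem cube_balancing_approximation
    {Ω : Type*} [MeasurableSpace Ω] (P : Measure Ω) [IsProbabilityMeasure P]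
    (c : ℝ) (hc0 : 0 < c) (hc : c ≤ 1 / 2)
    (r : ℝ) (hr : 2 ≤ r)
    (X : ℕ → Ω → ℝ)
    (hXmeas : ∀ i, Measurable (X i))
    (hXindep : iIndepFun X P)
    (hXident : ∀ i, Measure.map (X i) P = Measure.map (X 0) P)
    (hXmom : Integrable (fun ω => |X 0 ω| ^ r) P)
    (π : ℝ → ℝ) (hπmeas : Measurable π)
    (hπrange : ∀ x, π x ∈ Set.Icc c (1 - c))
    (D : ℕ → ℕ → Ω → ℝ)
    (hD01 : ∀ n i ω, D n i ω = 0 ∨ D n i ω = 1)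
    (q : ℕ → ℝ) (hq : ∀ n, 1 ≤ q n)
    (Δ : ℕ → Ω → ℝ)
    (hΔ : ∀ n ω, Δ n ω
      = (1 / (n : ℝ)) * ∑ i ∈ Finset.range n, X i ω * D n i ω / π (X i ω)
        - (1 / (n : ℝ)) * ∑ i ∈ Finset.range n, X i ω)
    (hbound : ∀ n, ∀ hn : 0 < n, ∀ᵐ ω ∂P, |Δ n ω|
      ≤ (q n / n) * ((Finset.range n).sup' (Finset.nonempty_range_iff.mpr hn.ne')
          fun i => |X i ω / π (X i ω)|)) :
    TendstoInMeasure P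
        (fun (n : ℕ) ω => ((n : ℝ) ^ ((1 : ℝ) - 1 / r) / q n) * Δ n ω)
        Filter.atTop (fun _ => (0 : ℝ))
      ∧ ∀ K : ℝ, (∀ᵐ ω ∂P, |X 0 ω| ≤ K) →
          ∀ n, 0 < n → ∀ᵐ ω ∂P, |Δ n ω| ≤ K * q n / (c * n) := by
  have hr0 : (0 : ℝ) < r := by linarith
  have h1r : (0 : ℝ) < 1 / r := by positivity
  have hident : ∀ (i : ℕ) (s : Set ℝ), MeasurableSet s → P (X i ⁻¹' s) = P (X 0 ⁻¹' s) := by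
    intro i s hs
    rw [← Measure.map_apply (hXmeas i) hs, hXident i, Measure.map_apply (hXmeas 0) hs]
  have hπpos : ∀ x : ℝ, 0 < π x := fun x => lt_of_lt_of_le hc0 (hπrange x).1
  have hratio : ∀ (i : ℕ) (ω : Ω), |X i ω / π (X i ω)| ≤ |X i ω| / c := by
    intro i ω
    rw [abs_div, abs_of_pos (hπpos _)]
    exact div_le_div_of_nonneg_left (abs_nonneg _) hc0 (hπrange _).1
  constructor
  · -- convergence in probability
    rw [tendstoInMeasure_iff_dist]
    intro ε hε
    set a : ℕ → ℝ := fun n => ε * c * (n : ℝ) ^ (1 / r : ℝ) with ha_def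
    have ha_pos : ∀ n : ℕ, 0 < n → 0 < a n := by
      intro n hn
      have hN : (0 : ℝ) < (n : ℝ) := Nat.cast_pos.mpr hn
      have : (0 : ℝ) < (n : ℝ) ^ (1 / r : ℝ) := Real.rpow_pos_of_pos hN _
      simp only [ha_def]
      positivity
    have hT : ∀ n : ℕ, MeasurableSet {ω | a n ≤ |X 0 ω|} :=
      fun n => measurableSet_le measurable_const (hXmeas 0).abs
    set g : ℕ → ℝ := fun n =>
      ∫ ω, Set.indicator {ω' | a n ≤ |X 0 ω'|} (fun ω' => |X 0 ω'| ^ r) ω ∂P with hg_def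
    have hg_nonneg : ∀ n, 0 ≤ g n := by
      intro n
      refine integral_nonneg fun ω => ?_
      exact Set.indicator_nonneg (fun ω' _ => Real.rpow_nonneg (abs_nonneg _) r) ω
    have ha_top : Tendsto a atTop atTop := by
      have h1 : Tendsto (fun n : ℕ => (n : ℝ) ^ (1 / r : ℝ)) atTop atTop :=
        (tendsto_rpow_atTop h1r).comp tendsto_natCast_atTop_atTop
      have hεc : (0 : ℝ) < ε * c := by positivity
      exact h1.const_mul_atTop hεc
    -- dominated convergence : g → 0
    have hg0 : Tendsto g atTop (𝓝 0) := by
      have hDCT := tendsto_integral_of_dominated_convergence (μ := P)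
        (F := fun n ω => Set.indicator {ω' | a n ≤ |X 0 ω'|} (fun ω' => |X 0 ω'| ^ r) ω)
        (f := fun _ => (0 : ℝ)) (bound := fun ω => |X 0 ω| ^ r)
        (fun n => (((hXmeas 0).abs.pow_const r).indicator (hT n)).aestronglyMeasurable)
        hXmom
        (fun n => ae_of_all _ fun ω => by
          rw [Real.norm_eq_abs,
            abs_of_nonneg (Set.indicator_nonneg
              (fun ω' _ => Real.rpow_nonneg (abs_nonneg _) r) ω)]
          exact Set.indicator_le_self'
            (fun ω' _ => Real.rpow_nonneg (abs_nonneg _) r) ω)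
        (ae_of_all _ fun ω => by
          have hev : ∀ᶠ n in atTop,
              Set.indicator {ω' | a n ≤ |X 0 ω'|} (fun ω' => |X 0 ω'| ^ r) ω = 0 := by
            filter_upwards [ha_top.eventually_gt_atTop (|X 0 ω|)] with n hn
            exact Set.indicator_of_notMem (s := {ω' | a n ≤ |X 0 ω'|})
              (not_le.mpr hn) _
          exact Tendsto.congr' (Filter.EventuallyEq.symm hev) tendsto_const_nhds)
      simpa using hDCT
    -- Markov inequality
    have hMark : ∀ n : ℕ, 0 < n →
        (P {ω | a n ≤ |X 0 ω|}).toReal ≤ g n / (a n) ^ r := by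
      intro n hn
      have hap := ha_pos n hn
      have har : (0 : ℝ) < (a n) ^ r := Real.rpow_pos_of_pos hap r
      have hf_nonneg : 0 ≤ᵐ[P]
          fun ω => Set.indicator {ω' | a n ≤ |X 0 ω'|} (fun ω' => |X 0 ω'| ^ r) ω :=
        ae_of_all _ fun ω =>
          Set.indicator_nonneg (fun ω' _ => Real.rpow_nonneg (abs_nonneg _) r) ω
      have hf_int :
          Integrable (fun ω =>
            Set.indicator {ω' | a n ≤ |X 0 ω'|} (fun ω' => |X 0 ω'| ^ r) ω) P :=
        hXmom.indicator (hT n)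
      have hmark := mul_meas_ge_le_integral_of_nonneg hf_nonneg hf_int ((a n) ^ r)
      have hsub : {ω | a n ≤ |X 0 ω|} ⊆
          {ω | (a n) ^ r ≤
            Set.indicator {ω' | a n ≤ |X 0 ω'|} (fun ω' => |X 0 ω'| ^ r) ω} := by
        intro ω hω
        rw [Set.mem_setOf_eq, Set.indicator_of_mem hω]
        exact Real.rpow_le_rpow hap.le hω hr0.le
      have hle : (P {ω | a n ≤ |X 0 ω|}).toReal ≤
          (P {ω | (a n) ^ r ≤
            Set.indicator {ω' | a n ≤ |X 0 ω'|} (fun ω' => |X 0 ω'| ^ r) ω}).toReal :=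
        ENNReal.toReal_mono (measure_ne_top _ _) (measure_mono hsub)
      rw [le_div_iff₀ har]
      calc (P {ω | a n ≤ |X 0 ω|}).toReal * a n ^ r
          ≤ (P {ω | (a n) ^ r ≤
              Set.indicator {ω' | a n ≤ |X 0 ω'|} (fun ω' => |X 0 ω'| ^ r) ω}).toReal
              * a n ^ r := by gcongr
        _ = a n ^ r * (P {ω | (a n) ^ r ≤
              Set.indicator {ω' | a n ≤ |X 0 ω'|} (fun ω' => |X 0 ω'| ^ r) ω}).toReal :=
            mul_comm _ _
        _ ≤ g n := hmark
    -- the per-n event bound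
    have hEvent : ∀ n : ℕ, 0 < n →
        P {ω | ε ≤ dist (((n : ℝ) ^ ((1 : ℝ) - 1 / r) / q n) * Δ n ω) 0}
          ≤ ENNReal.ofReal (g n / (ε * c) ^ r) := by
      intro n hn
      have hNpos : (0 : ℝ) < (n : ℝ) := Nat.cast_pos.mpr hn
      have hqpos : (0 : ℝ) < q n := lt_of_lt_of_le one_pos (hq n)
      have hNr : (0 : ℝ) < (n : ℝ) ^ (1 / r : ℝ) := Real.rpow_pos_of_pos hNpos _
      have hcoef : (0 : ℝ) ≤ (n : ℝ) ^ ((1 : ℝ) - 1 / r) / q n :=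
        div_nonneg (Real.rpow_nonneg hNpos.le _) hqpos.le
      have hsubae : ∀ᵐ ω ∂P,
          ε ≤ dist (((n : ℝ) ^ ((1 : ℝ) - 1 / r) / q n) * Δ n ω) 0 →
          ω ∈ ⋃ i ∈ Finset.range n, {ω' | a n ≤ |X i ω'|} := by
        filter_upwards [hbound n hn] with ω Hb Hε
        rw [Real.dist_eq, sub_zero, abs_mul, abs_of_nonneg hcoef] at Hε
        set M := (Finset.range n).sup' (Finset.nonempty_range_iff.mpr hn.ne')
          (fun i => |X i ω / π (X i ω)|) with hM
        have h2 : ε ≤ ((n : ℝ) ^ ((1 : ℝ) - 1 / r) / q n) * ((q n / n) * M) :=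
          le_trans Hε (mul_le_mul_of_nonneg_left Hb hcoef)
        have h3 : ((n : ℝ) ^ ((1 : ℝ) - 1 / r) / q n) * ((q n / n) * M)
            = M / (n : ℝ) ^ (1 / r : ℝ) := by
          rw [Real.rpow_sub hNpos, Real.rpow_one]
          field_simp
        rw [h3] at h2
        have h4 : ε * (n : ℝ) ^ (1 / r : ℝ) ≤ M := (le_div_iff₀ hNr).mp h2
        obtain ⟨i, hi, hfi⟩ :=
          (Finset.le_sup'_iff (Finset.nonempty_range_iff.mpr hn.ne')).mp h4
        have h5 : ε * (n : ℝ) ^ (1 / r : ℝ) ≤ |X i ω| / c := le_trans hfi (hratio i ω)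
        have h6 : a n ≤ |X i ω| := by
          have h7 := (le_div_iff₀ hc0).mp h5
          calc a n = ε * (n : ℝ) ^ (1 / r : ℝ) * c := by rw [ha_def]; ring
            _ ≤ |X i ω| := h7
        exact Set.mem_biUnion hi h6
      have hfin : (n : ℝ≥0∞) * P {ω' | a n ≤ |X 0 ω'|} ≠ ⊤ :=
        ENNReal.mul_ne_top (by simp) (measure_ne_top _ _)
      have hεcr : (0 : ℝ) < (ε * c) ^ r := Real.rpow_pos_of_pos (by positivity) r
      have hanr : (a n) ^ r = (ε * c) ^ r * n := by
        rw [ha_def]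
        simp only []
        rw [Real.mul_rpow (by positivity) (Real.rpow_nonneg hNpos.le _),
          ← Real.rpow_mul hNpos.le, one_div_mul_cancel hr0.ne', Real.rpow_one]
      calc P {ω | ε ≤ dist (((n : ℝ) ^ ((1 : ℝ) - 1 / r) / q n) * Δ n ω) 0}
          ≤ P (⋃ i ∈ Finset.range n, {ω' | a n ≤ |X i ω'|}) := by
            apply measure_mono_ae
            exact hsubae
        _ ≤ ∑ i ∈ Finset.range n, P {ω' | a n ≤ |X i ω'|} :=
            measure_biUnion_finset_le _ _
        _ = ∑ _i ∈ Finset.range n, P {ω' | a n ≤ |X 0 ω'|} := by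
            refine Finset.sum_congr rfl fun i _ => ?_
            exact hident i {x | a n ≤ |x|}
              (measurableSet_le measurable_const measurable_abs)
        _ = (n : ℝ≥0∞) * P {ω' | a n ≤ |X 0 ω'|} := by
            rw [Finset.sum_const, Finset.card_range, nsmul_eq_mul]
        _ ≤ ENNReal.ofReal (g n / (ε * c) ^ r) := by
            rw [ENNReal.le_ofReal_iff_toReal_le hfin
              (div_nonneg (hg_nonneg n) hεcr.le)]
            rw [ENNReal.toReal_mul, ENNReal.toReal_natCast]
            have h8 : (n : ℝ) * (P {ω' | a n ≤ |X 0 ω'|}).toReal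
                ≤ (n : ℝ) * (g n / (a n) ^ r) := by
              gcongr
              exact hMark n hn
            refine le_trans h8 (le_of_eq ?_)
            rw [hanr]
            field_simp
    -- squeeze
    have hub : Tendsto (fun n => ENNReal.ofReal (g n / (ε * c) ^ r)) atTop (𝓝 0) := by
      have h9 : Tendsto (fun n => g n / (ε * c) ^ r) atTop (𝓝 0) := by
        simpa using hg0.div_const ((ε * c) ^ r)
      have := (ENNReal.tendsto_ofReal h9)
      simpa using this
    refine tendsto_of_tendsto_of_tendsto_of_le_of_le' tendsto_const_nhds hub
      (Filter.Eventually.of_forall fun n => zero_le) ?_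
    filter_upwards [Filter.eventually_gt_atTop 0] with n hn
    exact hEvent n hn
  · -- bounded case
    intro K hK n hn
    obtain ⟨ω₀, hω₀⟩ := hK.exists
    have hK0 : 0 ≤ K := le_trans (abs_nonneg _) hω₀
    have hKi : ∀ i : ℕ, ∀ᵐ ω ∂P, |X i ω| ≤ K := by
      intro i
      have hs : MeasurableSet {x : ℝ | ¬ |x| ≤ K} :=
        (measurableSet_le measurable_abs measurable_const).compl
      rw [ae_iff] at hK ⊢
      calc P {ω | ¬|X i ω| ≤ K} = P (X i ⁻¹' {x | ¬|x| ≤ K}) := rfl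
        _ = P (X 0 ⁻¹' {x | ¬|x| ≤ K}) := hident i _ hs
        _ = 0 := hK
    have hN : (0 : ℝ) < (n : ℝ) := Nat.cast_pos.mpr hn
    have hqn : (0 : ℝ) ≤ q n / n := div_nonneg (by linarith [hq n]) hN.le
    filter_upwards [hbound n hn, ae_all_iff.2 hKi] with ω Hb HK
    have hsup : ((Finset.range n).sup' (Finset.nonempty_range_iff.mpr hn.ne')
        fun i => |X i ω / π (X i ω)|) ≤ K / c := by
      refine Finset.sup'_le _ _ fun i _ => ?_
      refine le_trans (hratio i ω) ?_
      gcongr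
      exact HK i
    calc |Δ n ω| ≤ (q n / n) * ((Finset.range n).sup'
          (Finset.nonempty_range_iff.mpr hn.ne') fun i => |X i ω / π (X i ω)|) := Hb
      _ ≤ (q n / n) * (K / c) := mul_le_mul_of_nonneg_left hsup hqn
      _ = K * q n / (c * n) := by ring
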